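/- For every integer n ≥ 0, f_3(n) = 2^{2n-1}·C(3n/2, n) + 2^{2n-1}·C(3n/2 - 1/2, n), where the binomial coefficients on the right are generalized binomial coefficients with rational upper arguments (equivalently, 2·f_3(n) = 4^n·(C(3n/2, n) + C((3n-1)/2, n))). -/

import Mathlib

open Finset

/-- Generalized binomial coefficient `C(q, k) = q(q-1)⋯(q-k+1)/k!` for rational `q`. -/
noncomputable def qchoose (q : ℚ) (k : ℕ) : ℚ :=
  (∏ j ∈ Finset.range k, (q - j)) / (k.factorial : ℚ)

/-- `f₃(n) = Σ_{i=n}^{2n} C(3n, n+i)·C(i, n)`. -/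
def f3 (n : ℕ) : ℕ :=
  ∑ i ∈ Finset.Icc n (2 * n), (3 * n).choose (n + i) * i.choose n

/-- Auxiliary sequence `A(n) = Σ_{j=0}^{n} C(3n+1, 2n+1+j)·C(n+j, n)`. -/
def Aseq (n : ℕ) : ℕ :=
  ∑ j ∈ Finset.range (n + 1), (3 * n + 1).choose (2 * n + 1 + j) * (n + j).choose n

lemma f3_sum (n : ℕ) :
    f3 n = ∑ j ∈ Finset.range (n + 1), (3 * n).choose (2 * n + j) * (n + j).choose n := by
  rw [f3, ← Finset.Ico_add_one_right_eq_Icc, Finset.sum_Ico_eq_sum_range]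
  rw [show 2 * n + 1 - n = n + 1 by omega]
  apply Finset.sum_congr rfl
  intro j _
  congr 2 <;> omega

/-- Telescoping certificate for recurrence I. -/
noncomputable def g1 (n j : ℕ) : ℚ :=
  (j : ℚ) * (((n : ℚ) + 1) * ((n : ℚ) + 2) - (5 * (n : ℚ) + 4) * (j : ℚ) - 2 * (j : ℚ) ^ 2)
    * ((3 * n + 3).choose (2 * n + 2 + j) : ℚ) * ((n + j).choose n : ℚ)

/-- Telescoping certificate for recurrence II. -/
noncomputable def g2 (n j : ℕ) : ℚ :=
  -(j : ℚ) * ((j : ℚ) + 5 * (n : ℚ) + 5)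
    * ((3 * n + 3).choose (2 * n + 2 + j) : ℚ) * ((n + j).choose n : ℚ)

section perterm

variable (n j : ℕ)

private lemma alg1 (n j X Y c1 c2 c3 c4 c5 c6 c7 : ℚ)
    (hn1 : n + 1 ≠ 0) (hd1 : 2 * n + 1 + j ≠ 0) (hd2 : 2 * n + 2 + j ≠ 0)
    (hd3 : 2 * n + 3 + j ≠ 0) (hd4 : n + 1 - j ≠ 0) (hd5 : j + 1 ≠ 0)
    (hY1 : (n + 1) * c2 = (n + 1 + j) * Y)
    (hX1 : c3 * (2 * n + 1 + j) = (3 * n + 1) * X)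
    (hX2 : c7 * (2 * n + 2 + j) = (3 * n + 2) * c3)
    (hX3 : c5 * (2 * n + 3 + j) = (3 * n + 3) * c7)
    (hX4 : c1 * (2 * n + 3 + j) = (3 * n + 4) * c4)
    (hX5 : c5 * (2 * n + 3 + j) = c4 * (n + 1 - j))
    (hY2 : c6 * (j + 1) = c2 * (n + 1)) :
    ((3 * n + 2) * (n + 1)) * ((n + 1) * c1 * c2 + 6 * (3 * n + 1) * c3 * Y
        - 12 * (3 * n + 1) * X * Y)
      = (j + 1) * ((n + 1) * (n + 2) - (5 * n + 4) * (j + 1) - 2 * (j + 1) ^ 2) * c5 * c6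
        - j * ((n + 1) * (n + 2) - (5 * n + 4) * j - 2 * j ^ 2) * c4 * Y := by
  have e2 : c2 = (n + 1 + j) * Y / (n + 1) := by field_simp; linarith
  have e3 : c3 = (3 * n + 1) * X / (2 * n + 1 + j) := by rw [eq_div_iff hd1]; linarith
  have e7 : c7 = (3 * n + 2) * c3 / (2 * n + 2 + j) := by rw [eq_div_iff hd2]; linarith
  have e5 : c5 = (3 * n + 3) * c7 / (2 * n + 3 + j) := by rw [eq_div_iff hd3]; linarith
  have e4 : c4 = c5 * (2 * n + 3 + j) / (n + 1 - j) := by field_simp; linarith [hX5]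
  have e1 : c1 = (3 * n + 4) * c4 / (2 * n + 3 + j) := by rw [eq_div_iff hd3]; linarith
  have e6 : c6 = c2 * (n + 1) / (j + 1) := by field_simp; linarith
  rw [e1, e4, e5, e7, e3, e6, e2]
  have h1' : n * 2 + 1 + j ≠ 0 := by contrapose! hd1; linarith
  have h2' : n * 2 + 2 + j ≠ 0 := by contrapose! hd2; linarith
  have h3' : n * 2 + 3 + j ≠ 0 := by contrapose! hd3; linarith
  have h2'' : 2 * (n + 1) + j ≠ 0 := by contrapose! hd2; linarith
  field_simp
  ring

private lemma alg2 (n j X Y c1 c2 c3 c4 c5 c6 c7 : ℚ)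
    (hn1 : n + 1 ≠ 0) (hd1 : 2 * n + 1 + j ≠ 0) (hd2 : 2 * n + 2 + j ≠ 0)
    (hd3 : 2 * n + 3 + j ≠ 0) (hd4 : n + 1 - j ≠ 0) (hd5 : j + 1 ≠ 0)
    (hY1 : (n + 1) * c2 = (n + 1 + j) * Y)
    (hX1 : c3 * (2 * n + 1 + j) = (3 * n + 1) * X)
    (hX2 : c7 * (2 * n + 2 + j) = (3 * n + 2) * c3)
    (hX3 : c5 * (2 * n + 3 + j) = (3 * n + 3) * c7)
    (hX4 : c1 * (2 * n + 3 + j) = (3 * n + 4) * c4)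
    (hX5 : c5 * (2 * n + 3 + j) = c4 * (n + 1 - j))
    (hY2 : c6 * (j + 1) = c2 * (n + 1)) :
    (3 * (n + 1)) * (2 * (n + 1) * c4 * c2 - 2 * (3 * n + 2) * c3 * Y - (n + 1) * c1 * c2)
      = (-(j + 1) * ((j + 1) + 5 * n + 5) * c5 * c6) - (-j * (j + 5 * n + 5) * c4 * Y) := by
  have e2 : c2 = (n + 1 + j) * Y / (n + 1) := by field_simp; linarith
  have e3 : c3 = (3 * n + 1) * X / (2 * n + 1 + j) := by rw [eq_div_iff hd1]; linarith
  have e7 : c7 = (3 * n + 2) * c3 / (2 * n + 2 + j) := by rw [eq_div_iff hd2]; linarith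
  have e5 : c5 = (3 * n + 3) * c7 / (2 * n + 3 + j) := by rw [eq_div_iff hd3]; linarith
  have e4 : c4 = c5 * (2 * n + 3 + j) / (n + 1 - j) := by field_simp; linarith [hX5]
  have e1 : c1 = (3 * n + 4) * c4 / (2 * n + 3 + j) := by rw [eq_div_iff hd3]; linarith
  have e6 : c6 = c2 * (n + 1) / (j + 1) := by field_simp; linarith
  rw [e1, e4, e5, e7, e3, e6, e2]
  have h1' : n * 2 + 1 + j ≠ 0 := by contrapose! hd1; linarith
  have h2' : n * 2 + 2 + j ≠ 0 := by contrapose! hd2; linarith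
  have h3' : n * 2 + 3 + j ≠ 0 := by contrapose! hd3; linarith
  have h2'' : 2 * (n + 1) + j ≠ 0 := by contrapose! hd2; linarith
  have h2''' : (n + 1) * 2 + j ≠ 0 := by contrapose! hd2; linarith
  field_simp
  ring

/-- All the cast binomial relations needed, packaged. -/
private lemma hyps (n j : ℕ) (hj : j ≤ n) :
    (((n : ℚ)) + 1) * ((n + 1 + j).choose (n + 1) : ℚ)
        = ((n : ℚ) + 1 + j) * ((n + j).choose n : ℚ)
      ∧ ((3 * n + 1).choose (2 * n + 1 + j) : ℚ) * (2 * (n : ℚ) + 1 + j)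
        = (3 * (n : ℚ) + 1) * ((3 * n).choose (2 * n + j) : ℚ)
      ∧ ((3 * n + 2).choose (2 * n + 2 + j) : ℚ) * (2 * (n : ℚ) + 2 + j)
        = (3 * (n : ℚ) + 2) * ((3 * n + 1).choose (2 * n + 1 + j) : ℚ)
      ∧ ((3 * n + 3).choose (2 * n + 3 + j) : ℚ) * (2 * (n : ℚ) + 3 + j)
        = (3 * (n : ℚ) + 3) * ((3 * n + 2).choose (2 * n + 2 + j) : ℚ)
      ∧ ((3 * n + 4).choose (2 * n + 3 + j) : ℚ) * (2 * (n : ℚ) + 3 + j)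
        = (3 * (n : ℚ) + 4) * ((3 * n + 3).choose (2 * n + 2 + j) : ℚ)
      ∧ ((3 * n + 3).choose (2 * n + 3 + j) : ℚ) * (2 * (n : ℚ) + 3 + j)
        = ((3 * n + 3).choose (2 * n + 2 + j) : ℚ) * ((n : ℚ) + 1 - j)
      ∧ ((n + 1 + j).choose n : ℚ) * ((j : ℚ) + 1)
        = ((n + 1 + j).choose (n + 1) : ℚ) * ((n : ℚ) + 1) := by
  refine ⟨?_, ?_, ?_, ?_, ?_, ?_, ?_⟩
  · have h := Nat.add_one_mul_choose_eq (n + j) n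
    rw [show n + j + 1 = n + 1 + j by omega, show n + 1 = n + 1 from rfl] at h
    have := congrArg (fun x : ℕ => (x : ℚ)) h
    push_cast at this
    linear_combination -this
  · have h := Nat.add_one_mul_choose_eq (3 * n) (2 * n + j)
    rw [show 3 * n + 1 = 3 * n + 1 from rfl, show 2 * n + j + 1 = 2 * n + 1 + j by omega] at h
    have := congrArg (fun x : ℕ => (x : ℚ)) h
    push_cast at this
    linear_combination -this
  · have h := Nat.add_one_mul_choose_eq (3 * n + 1) (2 * n + 1 + j)
    rw [show 3 * n + 1 + 1 = 3 * n + 2 by omega, show 2 * n + 1 + j + 1 = 2 * n + 2 + j by omega] at h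
    have := congrArg (fun x : ℕ => (x : ℚ)) h
    push_cast at this
    linear_combination -this
  · have h := Nat.add_one_mul_choose_eq (3 * n + 2) (2 * n + 2 + j)
    rw [show 3 * n + 2 + 1 = 3 * n + 3 by omega, show 2 * n + 2 + j + 1 = 2 * n + 3 + j by omega] at h
    have := congrArg (fun x : ℕ => (x : ℚ)) h
    push_cast at this
    linear_combination -this
  · have h := Nat.add_one_mul_choose_eq (3 * n + 3) (2 * n + 2 + j)
    rw [show 3 * n + 3 + 1 = 3 * n + 4 by omega, show 2 * n + 2 + j + 1 = 2 * n + 3 + j by omega] at h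
    have := congrArg (fun x : ℕ => (x : ℚ)) h
    push_cast at this
    linear_combination -this
  · have h := Nat.choose_succ_right_eq (3 * n + 3) (2 * n + 2 + j)
    rw [show 2*n+2+j+1 = 2 * n + 3 + j by omega, show 3*n+3 - (2*n+2+j) = n + 1 - j by omega] at h
    have := congrArg (fun x : ℕ => (x : ℚ)) h
    push_cast [Nat.cast_sub (show j ≤ n + 1 by omega)] at this
    linear_combination this
  · have h := Nat.choose_succ_right_eq (n + 1 + j) n
    rw [show n + 1 = n.succ from rfl] at h
    rw [show n + 1 + j - n = j + 1 by omega] at h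
    have := congrArg (fun x : ℕ => (x : ℚ)) h
    push_cast at this
    linear_combination -this

lemma key1 (n j : ℕ) (hj : j ≤ n + 1) :
    ((3 * (n : ℚ) + 2) * ((n : ℚ) + 1))
        * (((n : ℚ) + 1) * ((3 * n + 4).choose (2 * n + 3 + j) : ℚ)
              * ((n + 1 + j).choose (n + 1) : ℚ)
          + 6 * (3 * (n : ℚ) + 1) * ((3 * n + 1).choose (2 * n + 1 + j) : ℚ)
              * ((n + j).choose n : ℚ)
          - 12 * (3 * (n : ℚ) + 1) * ((3 * n).choose (2 * n + j) : ℚ)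
              * ((n + j).choose n : ℚ))
      = g1 n (j + 1) - g1 n j := by
  rcases Nat.lt_or_ge j (n + 1) with hlt | hge
  · have hjn : j ≤ n := by omega
    obtain ⟨hY1, hX1, hX2, hX3, hX4, hX5, hY2⟩ := hyps n j hjn
    rw [g1, g1, show 2 * n + 2 + (j + 1) = 2 * n + 3 + j by omega,
      show n + (j + 1) = n + 1 + j by omega]
    push_cast
    have hd4 : (n : ℚ) + 1 - j ≠ 0 := by
      have : (j : ℚ) ≤ n := by exact_mod_cast hjn
      intro h; nlinarith
    have := alg1 (n : ℚ) (j : ℚ)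
      ((3 * n).choose (2 * n + j) : ℚ) ((n + j).choose n : ℚ)
      ((3 * n + 4).choose (2 * n + 3 + j) : ℚ) ((n + 1 + j).choose (n + 1) : ℚ)
      ((3 * n + 1).choose (2 * n + 1 + j) : ℚ) ((3 * n + 3).choose (2 * n + 2 + j) : ℚ)
      ((3 * n + 3).choose (2 * n + 3 + j) : ℚ) ((n + 1 + j).choose n : ℚ)
      ((3 * n + 2).choose (2 * n + 2 + j) : ℚ)
      (by positivity) (by positivity) (by positivity) (by positivity) hd4 (by positivity)
      hY1 hX1 hX2 hX3 hX4 hX5 hY2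
    exact this
  · have hj' : j = n + 1 := by omega
    subst hj'
    have z1 : (3 * n + 1).choose (2 * n + 1 + (n + 1)) = 0 :=
      Nat.choose_eq_zero_of_lt (by omega)
    have z2 : (3 * n).choose (2 * n + (n + 1)) = 0 :=
      Nat.choose_eq_zero_of_lt (by omega)
    have z3 : (3 * n + 3).choose (2 * n + 2 + (n + 1 + 1)) = 0 :=
      Nat.choose_eq_zero_of_lt (by omega)
    have o1 : (3 * n + 4).choose (2 * n + 3 + (n + 1)) = 1 := by
      rw [show 2 * n + 3 + (n + 1) = 3 * n + 4 by omega]; exact Nat.choose_self _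
    have o2 : (3 * n + 3).choose (2 * n + 2 + (n + 1)) = 1 := by
      rw [show 2 * n + 2 + (n + 1) = 3 * n + 3 by omega]; exact Nat.choose_self _
    have h := Nat.add_one_mul_choose_eq (2 * n + 1) n
    rw [show 2 * n + 1 + 1 = 2 * n + 2 by omega, show n + 1 = n + 1 from rfl] at h
    have hq := congrArg (fun x : ℕ => (x : ℚ)) h
    push_cast at hq
    rw [g1, g1, z3, o1]
    rw [show n + 1 + (n + 1) = 2 * n + 2 by omega, show n + (n + 1) = 2 * n + 1 by omega,
      z1, z2, o2]
    push_cast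
    linear_combination (-((3 * (n : ℚ) + 2) * ((n : ℚ) + 1))) * hq

lemma key2 (n j : ℕ) (hj : j ≤ n + 1) :
    (3 * ((n : ℚ) + 1))
        * (2 * ((n : ℚ) + 1) * ((3 * n + 3).choose (2 * n + 2 + j) : ℚ)
              * ((n + 1 + j).choose (n + 1) : ℚ)
          - 2 * (3 * (n : ℚ) + 2) * ((3 * n + 1).choose (2 * n + 1 + j) : ℚ)
              * ((n + j).choose n : ℚ)
          - ((n : ℚ) + 1) * ((3 * n + 4).choose (2 * n + 3 + j) : ℚ)
              * ((n + 1 + j).choose (n + 1) : ℚ))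
      = g2 n (j + 1) - g2 n j := by
  rcases Nat.lt_or_ge j (n + 1) with hlt | hge
  · have hjn : j ≤ n := by omega
    obtain ⟨hY1, hX1, hX2, hX3, hX4, hX5, hY2⟩ := hyps n j hjn
    rw [g2, g2, show 2 * n + 2 + (j + 1) = 2 * n + 3 + j by omega,
      show n + (j + 1) = n + 1 + j by omega]
    push_cast
    have hd4 : (n : ℚ) + 1 - j ≠ 0 := by
      have : (j : ℚ) ≤ n := by exact_mod_cast hjn
      intro h; nlinarith
    have := alg2 (n : ℚ) (j : ℚ)
      ((3 * n).choose (2 * n + j) : ℚ) ((n + j).choose n : ℚ)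
      ((3 * n + 4).choose (2 * n + 3 + j) : ℚ) ((n + 1 + j).choose (n + 1) : ℚ)
      ((3 * n + 1).choose (2 * n + 1 + j) : ℚ) ((3 * n + 3).choose (2 * n + 2 + j) : ℚ)
      ((3 * n + 3).choose (2 * n + 3 + j) : ℚ) ((n + 1 + j).choose n : ℚ)
      ((3 * n + 2).choose (2 * n + 2 + j) : ℚ)
      (by positivity) (by positivity) (by positivity) (by positivity) hd4 (by positivity)
      hY1 hX1 hX2 hX3 hX4 hX5 hY2
    exact this
  · have hj' : j = n + 1 := by omega
    subst hj'
    have z1 : (3 * n + 1).choose (2 * n + 1 + (n + 1)) = 0 :=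
      Nat.choose_eq_zero_of_lt (by omega)
    have z3 : (3 * n + 3).choose (2 * n + 2 + (n + 1 + 1)) = 0 :=
      Nat.choose_eq_zero_of_lt (by omega)
    have o1 : (3 * n + 4).choose (2 * n + 3 + (n + 1)) = 1 := by
      rw [show 2 * n + 3 + (n + 1) = 3 * n + 4 by omega]; exact Nat.choose_self _
    have o2 : (3 * n + 3).choose (2 * n + 2 + (n + 1)) = 1 := by
      rw [show 2 * n + 2 + (n + 1) = 3 * n + 3 by omega]; exact Nat.choose_self _
    have h := Nat.add_one_mul_choose_eq (2 * n + 1) n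
    rw [show 2 * n + 1 + 1 = 2 * n + 2 by omega, show n + 1 = n + 1 from rfl] at h
    have hq := congrArg (fun x : ℕ => (x : ℚ)) h
    push_cast at hq
    rw [g2, g2, z3, o1, o2]
    rw [show n + 1 + (n + 1) = 2 * n + 2 by omega, show n + (n + 1) = 2 * n + 1 by omega, z1]
    push_cast
    linear_combination (-(3 * ((n : ℚ) + 1))) * hq

end perterm

lemma rec1 (n : ℕ) :
    ((n : ℚ) + 1) * (Aseq (n + 1) : ℚ) + 6 * (3 * (n : ℚ) + 1) * (Aseq n : ℚ)
      = 12 * (3 * (n : ℚ) + 1) * (f3 n : ℚ) := by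
  have hA1 : ((Aseq (n + 1) : ℕ) : ℚ)
      = ∑ j ∈ Finset.range (n + 2),
          (((3 * n + 4).choose (2 * n + 3 + j) : ℚ) * ((n + 1 + j).choose (n + 1) : ℚ)) := by
    rw [Aseq]
    push_cast
    refine Finset.sum_congr rfl ?_
    intro j _
    rw [show 3 * (n + 1) + 1 = 3 * n + 4 by ring, show 2 * (n + 1) + 1 + j = 2 * n + 3 + j by ring]
  have hA0 : ((Aseq n : ℕ) : ℚ)
      = ∑ j ∈ Finset.range (n + 2),
          (((3 * n + 1).choose (2 * n + 1 + j) : ℚ) * ((n + j).choose n : ℚ)) := by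
    rw [Aseq, Finset.sum_range_succ (n := n + 1),
      show (3 * n + 1).choose (2 * n + 1 + (n + 1)) = 0 from Nat.choose_eq_zero_of_lt (by omega)]
    push_cast
    ring
  have hf : ((f3 n : ℕ) : ℚ)
      = ∑ j ∈ Finset.range (n + 2),
          (((3 * n).choose (2 * n + j) : ℚ) * ((n + j).choose n : ℚ)) := by
    rw [f3_sum, Finset.sum_range_succ (n := n + 1),
      show (3 * n).choose (2 * n + (n + 1)) = 0 from Nat.choose_eq_zero_of_lt (by omega)]
    push_cast
    ring
  have htel : ∑ j ∈ Finset.range (n + 2),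
      (((3 * (n : ℚ) + 2) * ((n : ℚ) + 1))
        * (((n : ℚ) + 1) * ((3 * n + 4).choose (2 * n + 3 + j) : ℚ)
              * ((n + 1 + j).choose (n + 1) : ℚ)
          + 6 * (3 * (n : ℚ) + 1) * ((3 * n + 1).choose (2 * n + 1 + j) : ℚ)
              * ((n + j).choose n : ℚ)
          - 12 * (3 * (n : ℚ) + 1) * ((3 * n).choose (2 * n + j) : ℚ)
              * ((n + j).choose n : ℚ))) = 0 := by
    have hcong : ∀ j ∈ Finset.range (n + 2),
        ((3 * (n : ℚ) + 2) * ((n : ℚ) + 1))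
          * (((n : ℚ) + 1) * ((3 * n + 4).choose (2 * n + 3 + j) : ℚ)
                * ((n + 1 + j).choose (n + 1) : ℚ)
            + 6 * (3 * (n : ℚ) + 1) * ((3 * n + 1).choose (2 * n + 1 + j) : ℚ)
                * ((n + j).choose n : ℚ)
            - 12 * (3 * (n : ℚ) + 1) * ((3 * n).choose (2 * n + j) : ℚ)
                * ((n + j).choose n : ℚ))
          = g1 n (j + 1) - g1 n j := by
      intro j hj
      exact key1 n j (by have := Finset.mem_range.mp hj; omega)
    rw [Finset.sum_congr rfl hcong, Finset.sum_range_sub (g1 n)]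
    rw [g1, g1,
      show (3 * n + 3).choose (2 * n + 2 + (n + 2)) = 0 from Nat.choose_eq_zero_of_lt (by omega)]
    push_cast
    ring
  have expand : ((n : ℚ) + 1) * (Aseq (n + 1) : ℚ) + 6 * (3 * (n : ℚ) + 1) * (Aseq n : ℚ)
      - 12 * (3 * (n : ℚ) + 1) * (f3 n : ℚ)
      = ∑ j ∈ Finset.range (n + 2),
          (((n : ℚ) + 1) * ((3 * n + 4).choose (2 * n + 3 + j) : ℚ)
              * ((n + 1 + j).choose (n + 1) : ℚ)
            + 6 * (3 * (n : ℚ) + 1) * ((3 * n + 1).choose (2 * n + 1 + j) : ℚ)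
                * ((n + j).choose n : ℚ)
            - 12 * (3 * (n : ℚ) + 1) * ((3 * n).choose (2 * n + j) : ℚ)
                * ((n + j).choose n : ℚ)) := by
    rw [hA1, hA0, hf, Finset.mul_sum, Finset.mul_sum, Finset.mul_sum,
      ← Finset.sum_add_distrib, ← Finset.sum_sub_distrib]
    exact Finset.sum_congr rfl fun j _ => by ring
  rw [← Finset.mul_sum] at htel
  have hK : ((3 * (n : ℚ) + 2) * ((n : ℚ) + 1)) ≠ 0 := by positivity
  have h0 := (mul_eq_zero.mp htel).resolve_left hK
  rw [h0] at expand
  linarith [expand]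

lemma rec2 (n : ℕ) :
    2 * ((n : ℚ) + 1) * (f3 (n + 1) : ℚ)
      = 2 * (3 * (n : ℚ) + 2) * (Aseq n : ℚ) + ((n : ℚ) + 1) * (Aseq (n + 1) : ℚ) := by
  have hA1 : ((Aseq (n + 1) : ℕ) : ℚ)
      = ∑ j ∈ Finset.range (n + 2),
          (((3 * n + 4).choose (2 * n + 3 + j) : ℚ) * ((n + 1 + j).choose (n + 1) : ℚ)) := by
    rw [Aseq]
    push_cast
    refine Finset.sum_congr rfl ?_
    intro j _
    rw [show 3 * (n + 1) + 1 = 3 * n + 4 by ring, show 2 * (n + 1) + 1 + j = 2 * n + 3 + j by ring]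
  have hA0 : ((Aseq n : ℕ) : ℚ)
      = ∑ j ∈ Finset.range (n + 2),
          (((3 * n + 1).choose (2 * n + 1 + j) : ℚ) * ((n + j).choose n : ℚ)) := by
    rw [Aseq, Finset.sum_range_succ (n := n + 1),
      show (3 * n + 1).choose (2 * n + 1 + (n + 1)) = 0 from Nat.choose_eq_zero_of_lt (by omega)]
    push_cast
    ring
  have hf1 : ((f3 (n + 1) : ℕ) : ℚ)
      = ∑ j ∈ Finset.range (n + 2),
          (((3 * n + 3).choose (2 * n + 2 + j) : ℚ) * ((n + 1 + j).choose (n + 1) : ℚ)) := by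
    rw [f3_sum]
    push_cast
    refine Finset.sum_congr rfl ?_
    intro j _
    rw [show 3 * (n + 1) = 3 * n + 3 by ring, show 2 * (n + 1) + j = 2 * n + 2 + j by ring]
  have htel : ∑ j ∈ Finset.range (n + 2),
      ((3 * ((n : ℚ) + 1))
        * (2 * ((n : ℚ) + 1) * ((3 * n + 3).choose (2 * n + 2 + j) : ℚ)
              * ((n + 1 + j).choose (n + 1) : ℚ)
          - 2 * (3 * (n : ℚ) + 2) * ((3 * n + 1).choose (2 * n + 1 + j) : ℚ)
              * ((n + j).choose n : ℚ)
          - ((n : ℚ) + 1) * ((3 * n + 4).choose (2 * n + 3 + j) : ℚ)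
              * ((n + 1 + j).choose (n + 1) : ℚ))) = 0 := by
    have hcong : ∀ j ∈ Finset.range (n + 2),
        (3 * ((n : ℚ) + 1))
          * (2 * ((n : ℚ) + 1) * ((3 * n + 3).choose (2 * n + 2 + j) : ℚ)
                * ((n + 1 + j).choose (n + 1) : ℚ)
            - 2 * (3 * (n : ℚ) + 2) * ((3 * n + 1).choose (2 * n + 1 + j) : ℚ)
                * ((n + j).choose n : ℚ)
            - ((n : ℚ) + 1) * ((3 * n + 4).choose (2 * n + 3 + j) : ℚ)
                * ((n + 1 + j).choose (n + 1) : ℚ))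
          = g2 n (j + 1) - g2 n j := by
      intro j hj
      exact key2 n j (by have := Finset.mem_range.mp hj; omega)
    rw [Finset.sum_congr rfl hcong, Finset.sum_range_sub (g2 n)]
    rw [g2, g2,
      show (3 * n + 3).choose (2 * n + 2 + (n + 2)) = 0 from Nat.choose_eq_zero_of_lt (by omega)]
    push_cast
    ring
  have expand : 2 * ((n : ℚ) + 1) * (f3 (n + 1) : ℚ)
      - 2 * (3 * (n : ℚ) + 2) * (Aseq n : ℚ) - ((n : ℚ) + 1) * (Aseq (n + 1) : ℚ)
      = ∑ j ∈ Finset.range (n + 2),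
          (2 * ((n : ℚ) + 1) * ((3 * n + 3).choose (2 * n + 2 + j) : ℚ)
              * ((n + 1 + j).choose (n + 1) : ℚ)
            - 2 * (3 * (n : ℚ) + 2) * ((3 * n + 1).choose (2 * n + 1 + j) : ℚ)
                * ((n + j).choose n : ℚ)
            - ((n : ℚ) + 1) * ((3 * n + 4).choose (2 * n + 3 + j) : ℚ)
                * ((n + 1 + j).choose (n + 1) : ℚ)) := by
    rw [hA1, hA0, hf1, Finset.mul_sum, Finset.mul_sum, Finset.mul_sum,
      ← Finset.sum_sub_distrib, ← Finset.sum_sub_distrib]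
    exact Finset.sum_congr rfl fun j _ => by ring
  rw [← Finset.mul_sum] at htel
  have hK : (3 * ((n : ℚ) + 1)) ≠ 0 := by positivity
  have h0 := (mul_eq_zero.mp htel).resolve_left hK
  rw [h0] at expand
  linarith [expand]

lemma prod_shift (q : ℚ) (k : ℕ) :
    (∏ i ∈ Finset.range k, (q + 1 - (i : ℚ))) * (q + 1 - (k : ℚ))
      = (q + 1) * ∏ i ∈ Finset.range k, (q - (i : ℚ)) := by
  rw [← Finset.prod_range_succ (fun i => q + 1 - (i : ℚ)) k, Finset.prod_range_succ']
  have hc : ∀ i ∈ Finset.range k, (q + 1 - (((i + 1) : ℕ) : ℚ)) = q - (i : ℚ) := by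
    intro i _
    push_cast
    ring
  rw [Finset.prod_congr rfl hc]
  push_cast
  ring

lemma qchoose_step1 (q : ℚ) (k : ℕ) :
    qchoose (q + 1) (k + 1) * ((k : ℚ) + 1) = qchoose q k * (q + 1) := by
  rw [qchoose, qchoose]
  have hp : ∏ i ∈ Finset.range (k + 1), (q + 1 - (i : ℚ))
      = (q + 1) * ∏ i ∈ Finset.range k, (q - (i : ℚ)) := by
    rw [Finset.prod_range_succ']
    have hc : ∀ i ∈ Finset.range k, (q + 1 - (((i + 1) : ℕ) : ℚ)) = q - (i : ℚ) := by
      intro i _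
      push_cast
      ring
    rw [Finset.prod_congr rfl hc]
    push_cast
    ring
  rw [hp, Nat.factorial_succ]
  have h1 : ((k.factorial : ℕ) : ℚ) ≠ 0 := Nat.cast_ne_zero.mpr k.factorial_ne_zero
  push_cast
  field_simp

lemma qchoose_mul_factorial (q : ℚ) (k : ℕ) :
    qchoose q k * (k.factorial : ℚ) = ∏ i ∈ Finset.range k, (q - (i : ℚ)) := by
  rw [qchoose]
  have h1 : ((k.factorial : ℕ) : ℚ) ≠ 0 := Nat.cast_ne_zero.mpr k.factorial_ne_zero
  field_simp

lemma qchoose_step2 (q : ℚ) (k : ℕ) :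
    qchoose (q + 2) (k + 1) * ((k : ℚ) + 1) * (q + 1 - (k : ℚ))
      = qchoose q k * ((q + 2) * (q + 1)) := by
  have hp : ∏ i ∈ Finset.range (k + 1), (q + 2 - (i : ℚ))
      = (q + 2) * ∏ i ∈ Finset.range k, (q + 1 - (i : ℚ)) := by
    rw [Finset.prod_range_succ']
    have hc : ∀ i ∈ Finset.range k, (q + 2 - (((i + 1) : ℕ) : ℚ)) = q + 1 - (i : ℚ) := by
      intro i _
      push_cast
      ring
    rw [Finset.prod_congr rfl hc]
    push_cast
    ring
  have h2 := prod_shift q k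
  have m1 := qchoose_mul_factorial (q + 2) (k + 1)
  have m2 := qchoose_mul_factorial q k
  have hfac : (((k + 1).factorial : ℕ) : ℚ) = ((k : ℚ) + 1) * (k.factorial : ℚ) := by
    rw [Nat.factorial_succ]
    push_cast
    ring
  have hF1 : (((k + 1).factorial : ℕ) : ℚ) ≠ 0 := Nat.cast_ne_zero.mpr (k + 1).factorial_ne_zero
  apply mul_right_cancel₀ hF1
  linear_combination ((k : ℚ) + 1) * (q + 1 - (k : ℚ)) * m1
    + ((k : ℚ) + 1) * (q + 1 - (k : ℚ)) * hp
    + ((k : ℚ) + 1) * (q + 2) * h2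
    - ((k : ℚ) + 1) * (q + 2) * (q + 1) * m2
    - (q + 2) * (q + 1) * (qchoose q k) * hfac

lemma main_ind (n : ℕ) :
    (Aseq n : ℚ) = 4 ^ n * qchoose (3 * (n : ℚ) / 2) n
      ∧ 2 * (f3 n : ℚ) - (Aseq n : ℚ) = 4 ^ n * qchoose ((3 * (n : ℚ) - 1) / 2) n := by
  induction n with
  | zero =>
    constructor
    · norm_num [Aseq, qchoose]
    · norm_num [f3, Aseq, qchoose]
  | succ n ih =>
    obtain ⟨ha, hb⟩ := ih
    have h1 := rec1 n
    have h2 := rec2 n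
    have hne : ((n : ℚ) + 1) ≠ 0 := by positivity
    constructor
    · have hq := qchoose_step2 ((3 * (n : ℚ) - 1) / 2) n
      rw [show (3 * (n : ℚ) - 1) / 2 + 2 = 3 * ((n : ℚ) + 1) / 2 by ring] at hq
      have key : ((n : ℚ) + 1) * (Aseq (n + 1) : ℚ)
          = 6 * (3 * (n : ℚ) + 1) * (4 ^ n * qchoose ((3 * (n : ℚ) - 1) / 2) n) := by
        rw [← hb]
        linear_combination h1
      push_cast
      apply mul_left_cancel₀
        (show (((n : ℚ) + 1) * (((n : ℚ) + 1) / 2)) ≠ 0 from by positivity)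
      linear_combination (((n : ℚ) + 1) / 2) * key - (4 : ℚ) ^ (n + 1) * hq
    · have hq := qchoose_step1 (3 * (n : ℚ) / 2) n
      rw [show 3 * (n : ℚ) / 2 + 1 = (3 * ((n : ℚ) + 1) - 1) / 2 by ring] at hq
      have key : ((n : ℚ) + 1) * (2 * (f3 (n + 1) : ℚ) - (Aseq (n + 1) : ℚ))
          = 2 * (3 * (n : ℚ) + 2) * (4 ^ n * qchoose (3 * (n : ℚ) / 2) n) := by
        rw [← ha]
        linear_combination h2
      push_cast
      apply mul_left_cancel₀ hne
      linear_combination key - (4 : ℚ) ^ (n + 1) * hq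

theorem f3_eq (n : ℕ) :
    (f3 n : ℚ) = (2 : ℚ) ^ (2 * (n : ℤ) - 1) * qchoose (3 * n / 2) n
      + (2 : ℚ) ^ (2 * (n : ℤ) - 1) * qchoose (3 * n / 2 - 1 / 2) n := by
  obtain ⟨ha, hb⟩ := main_ind n
  have hpow : (2 : ℚ) ^ (2 * (n : ℤ) - 1) = 4 ^ n / 2 := by
    rw [zpow_sub₀ (by norm_num : (2 : ℚ) ≠ 0), zpow_one]
    congr 1
    rw [show (2 : ℤ) * (n : ℤ) = ((2 * n : ℕ) : ℤ) by push_cast; ring, zpow_natCast, pow_mul]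
    norm_num
  rw [hpow, show 3 * (n : ℚ) / 2 - 1 / 2 = (3 * (n : ℚ) - 1) / 2 by ring]
  linear_combination (ha + hb) / 2
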